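/- Let m ≥ 1 and s ≥ 1 be integers, let c be a nonzero real number, and let b_1, …, b_{m+s} be distinct real numbers. If a vector (u_1, …, u_{m+s}) ∈ ℝ^{m+s} satisfies Σ_{j=1}^{m+s} b_j^l · exp(c·b_j) · u_j = 0 for every l ∈ {0, …, m−1} and Σ_{j=1}^{m+s} b_j^r · exp(−c·b_j) · u_j = 0 for every r ∈ {0, …, s−1}, then u_j = 0 for all j. Equivalently, the (m+s) × (m+s) matrix formed by these two blocks of rows is invertible. -/

import Mathlib

open Polynomial Real Finset


lemma rolle_many {f g : ℝ → ℝ} (hf : ∀ t, HasDerivAt f (g t) t) (n : ℕ)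
    (x : Fin (n + 1) → ℝ) (hx : StrictMono x) (h0 : ∀ i, f (x i) = 0) :
    ∃ y : Fin n → ℝ, StrictMono y ∧ ∀ i, g (y i) = 0 := by
  have hcont : Continuous f := Differentiable.continuous (fun t => (hf t).differentiableAt)
  have H : ∀ i : Fin n, ∃ y ∈ Set.Ioo (x i.castSucc) (x i.succ), g y = 0 := by
    intro i
    exact exists_hasDerivAt_eq_zero (hx (show i.castSucc < i.succ from Fin.castSucc_lt_succ)) hcont.continuousOn
      ((h0 _).trans (h0 _).symm) (fun t _ => hf t)
  choose y hy hgy using H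
  refine ⟨y, ?_, hgy⟩
  intro i j hij
  calc y i < x i.succ := (hy i).2
    _ ≤ x j.castSucc := hx.monotone (by simp [Fin.le_def]; omega)
    _ < y j := (hy j).1

lemma degree_lt_zero {Q : ℝ[X]} (h : Q.degree < ((0 : ℕ) : WithBot ℕ)) : Q = 0 :=
  Polynomial.degree_eq_bot.1 (Nat.WithBot.lt_zero_iff.1 (by exact_mod_cast h))

lemma key (a : ℝ) (ha : a ≠ 0) :
    ∀ (s m : ℕ) (P Q : ℝ[X]), P.degree < (m : ℕ) → Q.degree < (s : ℕ) →
    ∀ x : Fin (m + s) → ℝ, StrictMono x →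
    (∀ i, P.eval (x i) * Real.exp (a * x i) + Q.eval (x i) = 0) → P = 0 ∧ Q = 0 := by
  intro s
  induction s with
  | zero =>
    intro m P Q hP hQ x hx h0
    have hQ0 : Q = 0 := degree_lt_zero hQ
    subst hQ0
    refine ⟨?_, rfl⟩
    rcases eq_or_ne P 0 with h | h
    · exact h
    have hm : P.natDegree < m := (Polynomial.natDegree_lt_iff_degree_lt h).2 hP
    refine Polynomial.eq_zero_of_natDegree_lt_card_of_eval_eq_zero P hx.injective
      (fun i => ?_) (by simpa [Fintype.card_fin] using hm)
    have hi := h0 i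
    simp only [Polynomial.eval_zero, add_zero, mul_eq_zero] at hi
    rcases hi with h' | h'
    · exact h'
    · exact absurd h' (Real.exp_ne_zero _)
  | succ s ih =>
    intro m P Q hP hQ x hx h0
    set P₁ : ℝ[X] := Polynomial.derivative P + Polynomial.C a * P with hP₁def
    have hderiv : ∀ t, HasDerivAt (fun t => P.eval t * Real.exp (a * t) + Q.eval t)
        (P₁.eval t * Real.exp (a * t) + (Polynomial.derivative Q).eval t) t := by
      intro t
      have h1 : HasDerivAt (fun t => Real.exp (a * t)) (Real.exp (a * t) * a) t := by
        simpa using ((hasDerivAt_id t).const_mul a).exp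
      have h3 := ((P.hasDerivAt t).mul h1).add (Q.hasDerivAt t)
      refine h3.congr_deriv ?_
      simp [hP₁def]
      ring
    obtain ⟨y, hy, hgy⟩ := rolle_many hderiv (m + s) x hx h0
    have hCP : (Polynomial.C a * P).degree ≤ P.degree :=
      le_trans (Polynomial.degree_mul_le _ _)
        (by simpa using add_le_add (Polynomial.degree_C_le) (le_refl P.degree))
    have hP₁deg : P₁.degree < (m : ℕ) :=
      lt_of_le_of_lt (le_trans (Polynomial.degree_add_le _ _)
        (max_le Polynomial.degree_derivative_le hCP)) hP
    have hQ'deg : (Polynomial.derivative Q).degree < (s : ℕ) := by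
      rcases eq_or_ne (Polynomial.derivative Q) 0 with h | h
      · rw [h, Polynomial.degree_zero]
        exact WithBot.bot_lt_coe s
      · have hQ0 : Q ≠ 0 := fun e => h (by simp [e])
        have hnd : Q.natDegree ≠ 0 := fun e =>
          h (by rw [Polynomial.eq_C_of_natDegree_eq_zero e]; simp)
        have h1 : (Polynomial.derivative Q).natDegree < Q.natDegree :=
          Polynomial.natDegree_derivative_lt hnd
        have h2 : Q.natDegree < s + 1 :=
          (Polynomial.natDegree_lt_iff_degree_lt hQ0).2 (by exact_mod_cast hQ)
        rw [Polynomial.degree_eq_natDegree h]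
        exact_mod_cast (by omega : (Polynomial.derivative Q).natDegree < s)
    obtain ⟨hP₁, hQ'⟩ := ih m P₁ (Polynomial.derivative Q) hP₁deg hQ'deg y hy hgy
    have hPzero : P = 0 := by
      by_contra h
      have h1 : Polynomial.derivative P = -(Polynomial.C a * P) := by
        linear_combination (hP₁def ▸ hP₁ : Polynomial.derivative P + Polynomial.C a * P = 0)
      have h2 : (Polynomial.derivative P).degree < P.degree := Polynomial.degree_derivative_lt h
      rw [h1, Polynomial.degree_neg, Polynomial.degree_C_mul ha] at h2
      exact lt_irrefl _ h2
    subst hPzero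
    have hQC : Q = Polynomial.C (Q.coeff 0) :=
      Polynomial.eq_C_of_natDegree_eq_zero (Polynomial.natDegree_eq_zero_of_derivative_eq_zero hQ')
    have h00 := h0 ⟨0, by omega⟩
    simp only [Polynomial.eval_zero, zero_mul, zero_add] at h00
    rw [hQC] at h00 ⊢
    simp only [Polynomial.eval_C] at h00
    simp [h00]

lemma vecMul_ker (m s : ℕ) (c : ℝ) (hc : c ≠ 0)
    (b : Fin (m + s) → ℝ) (hb : Function.Injective b) (v : Fin (m + s) → ℝ)
    (hv : (Matrix.of (fun i j : Fin (m + s) =>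
      if h : (i : ℕ) < m then b j ^ (i : ℕ) * Real.exp (c * b j)
      else b j ^ ((i : ℕ) - m) * Real.exp (-(c * b j)))).vecMul v = 0) : v = 0 := by
  classical
  set w : ℕ → ℝ := fun k => if h : k < m + s then v ⟨k, h⟩ else 0 with hw
  set P : ℝ[X] := ∑ l ∈ Finset.range m, Polynomial.C (w l) * Polynomial.X ^ l with hPdef
  set Q : ℝ[X] := ∑ r ∈ Finset.range s, Polynomial.C (w (m + r)) * Polynomial.X ^ r with hQdef
  have hPdeg : P.degree < (m : ℕ) := by
    refine lt_of_le_of_lt (Polynomial.degree_sum_le _ _) ?_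
    refine (Finset.sup_lt_iff (WithBot.bot_lt_coe (m : ℕ))).mpr (fun l hl => ?_)
    exact lt_of_le_of_lt (Polynomial.degree_C_mul_X_pow_le l _)
      (Nat.cast_lt.mpr (Finset.mem_range.1 hl))
  have hQdeg : Q.degree < (s : ℕ) := by
    refine lt_of_le_of_lt (Polynomial.degree_sum_le _ _) ?_
    refine (Finset.sup_lt_iff (WithBot.bot_lt_coe (s : ℕ))).mpr (fun r hr => ?_)
    exact lt_of_le_of_lt (Polynomial.degree_C_mul_X_pow_le r _)
      (Nat.cast_lt.mpr (Finset.mem_range.1 hr))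
  have hevalP : ∀ t : ℝ, P.eval t = ∑ l ∈ Finset.range m, w l * t ^ l := by
    intro t; rw [hPdef]; simp [Polynomial.eval_finset_sum]
  have hevalQ : ∀ t : ℝ, Q.eval t = ∑ r ∈ Finset.range s, w (m + r) * t ^ r := by
    intro t; rw [hQdef]; simp [Polynomial.eval_finset_sum]
  have hj : ∀ j, P.eval (b j) * Real.exp (c * b j) + Q.eval (b j) * Real.exp (-(c * b j)) = 0 := by
    intro j
    have hvj := congrFun hv j
    simp only [Matrix.vecMul, dotProduct, Matrix.of_apply, Pi.zero_apply] at hvj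
    set F : ℕ → ℝ := fun k => w k * (if k < m then b j ^ k * Real.exp (c * b j)
      else b j ^ (k - m) * Real.exp (-(c * b j))) with hF
    have step1 : ∑ i : Fin (m + s), v i *
        (if h : (i : ℕ) < m then b j ^ (i : ℕ) * Real.exp (c * b j)
          else b j ^ ((i : ℕ) - m) * Real.exp (-(c * b j))) = ∑ i : Fin (m + s), F (i : ℕ) := by
      refine Finset.sum_congr rfl (fun i _ => ?_)
      rw [hF]
      simp only [hw, i.isLt, dif_pos, dite_eq_ite]
    rw [step1, Fin.sum_univ_eq_sum_range F, Finset.sum_range_add] at hvj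
    have e1 : ∑ i ∈ Finset.range m, F i = P.eval (b j) * Real.exp (c * b j) := by
      rw [hevalP, Finset.sum_mul]
      refine Finset.sum_congr rfl (fun l hl => ?_)
      simp only [hF]
      rw [if_pos (Finset.mem_range.1 hl)]
      ring
    have e2 : ∑ i ∈ Finset.range s, F (m + i) = Q.eval (b j) * Real.exp (-(c * b j)) := by
      rw [hevalQ, Finset.sum_mul]
      refine Finset.sum_congr rfl (fun r hr => ?_)
      have hnr : ¬ (m + r < m) := by omega
      have hsub : m + r - m = r := by omega
      simp only [hF]
      rw [if_neg hnr, hsub]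
      ring
    rw [e1, e2] at hvj
    exact hvj
  -- strictly monotone enumeration of the points b j
  set S : Finset ℝ := Finset.univ.image b with hS
  have hcard : S.card = m + s := by
    rw [hS, Finset.card_image_of_injective _ hb, Finset.card_univ, Fintype.card_fin]
  set e := S.orderIsoOfFin hcard with he
  set x : Fin (m + s) → ℝ := fun i => (e i : ℝ) with hx
  have hxmono : StrictMono x := fun i k hik => by
    exact_mod_cast e.strictMono hik
  have hzero : ∀ i, P.eval (x i) * Real.exp ((2 * c) * x i) + Q.eval (x i) = 0 := by
    intro i
    have hmem : x i ∈ S := (e i).2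
    rw [hS, Finset.mem_image] at hmem
    obtain ⟨j, -, hj'⟩ := hmem
    rw [← hj']
    have eA : Real.exp (2 * c * b j) = Real.exp (c * b j) * Real.exp (c * b j) := by
      rw [← Real.exp_add]; congr 1; ring
    have eB : Real.exp (-(c * b j)) * Real.exp (c * b j) = 1 := by
      rw [← Real.exp_add]; simp
    linear_combination Real.exp (c * b j) * hj j + Polynomial.eval (b j) P * eA
      - Polynomial.eval (b j) Q * eB
  obtain ⟨hP0, hQ0⟩ := key (2 * c) (mul_ne_zero two_ne_zero hc) s m P Q hPdeg hQdeg x hxmono hzero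
  have hcoeffP : ∀ k, k < m → P.coeff k = w k := by
    intro k hk
    rw [hPdef, Polynomial.finset_sum_coeff]
    simp only [Polynomial.coeff_C_mul, Polynomial.coeff_X_pow, mul_ite, mul_one, mul_zero]
    rw [Finset.sum_ite_eq (Finset.range m) k w]
    simp [hk]
  have hcoeffQ : ∀ k, k < s → Q.coeff k = w (m + k) := by
    intro k hk
    rw [hQdef, Polynomial.finset_sum_coeff]
    simp only [Polynomial.coeff_C_mul, Polynomial.coeff_X_pow, mul_ite, mul_one, mul_zero]
    rw [Finset.sum_ite_eq (Finset.range s) k (fun r => w (m + r))]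
    simp [hk]
  funext i
  have hiw : v i = w (i : ℕ) := by simp [hw, i.isLt]
  by_cases hi : (i : ℕ) < m
  · have := hcoeffP (i : ℕ) hi
    rw [hP0] at this
    simp only [Polynomial.coeff_zero] at this
    simp [hiw, ← this]
  · have hr : (i : ℕ) - m < s := by have := i.isLt; omega
    have := hcoeffQ ((i : ℕ) - m) hr
    rw [hQ0] at this
    simp only [Polynomial.coeff_zero] at this
    have hmi : m + ((i : ℕ) - m) = (i : ℕ) := by omega
    rw [hmi] at this
    simp [hiw, ← this]

/-- For `m, s ≥ 1`, `c ≠ 0` and distinct reals `b_1, …, b_{m+s}`, the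
homogeneous `(m+s) × (m+s)` system consisting of the rows `∑_j b_j^l exp(c b_j) u_j = 0`
(`l = 0, …, m-1`) and `∑_j b_j^r exp(-c b_j) u_j = 0` (`r = 0, …, s-1`) has only the
trivial solution; equivalently, the corresponding block matrix is invertible. -/
theorem exp_vandermonde_two_block_system_trivial_solution
    (m s : ℕ) (hm : 1 ≤ m) (hs : 1 ≤ s) (c : ℝ) (hc : c ≠ 0)
    (b : Fin (m + s) → ℝ) (hb : Function.Injective b)
    (u : Fin (m + s) → ℝ)
    (h1 : ∀ l < m, ∑ j, b j ^ l * Real.exp (c * b j) * u j = 0)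
    (h2 : ∀ r < s, ∑ j, b j ^ r * Real.exp (-(c * b j)) * u j = 0) :
    (∀ j, u j = 0) ∧
    IsUnit (Matrix.of (fun i j : Fin (m + s) =>
      if h : (i : ℕ) < m then b j ^ (i : ℕ) * Real.exp (c * b j)
      else b j ^ ((i : ℕ) - m) * Real.exp (-(c * b j)))) := by
  set M := Matrix.of (fun i j : Fin (m + s) =>
      if h : (i : ℕ) < m then b j ^ (i : ℕ) * Real.exp (c * b j)
      else b j ^ ((i : ℕ) - m) * Real.exp (-(c * b j))) with hMdef
  have hinj : Function.Injective M.vecMul := by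
    intro v w hvw
    have h0 : M.vecMul (v - w) = 0 := by
      rw [Matrix.sub_vecMul]
      simpa using congrArg (fun z => z - Matrix.vecMul w M) hvw
    exact sub_eq_zero.1 (vecMul_ker m s c hc b hb (v - w) h0)
  have hMunit : IsUnit M := Matrix.vecMul_injective_iff_isUnit.mp hinj
  have hmv : M.mulVec u = 0 := by
    funext i
    show ∑ j, M i j * u j = 0
    by_cases hi : (i : ℕ) < m
    · simpa [hMdef, hi] using h1 (i : ℕ) hi
    · have hr : (i : ℕ) - m < s := by have := i.isLt; omega
      simpa [hMdef, hi] using h2 ((i : ℕ) - m) hr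
  have hu : u = 0 := (Matrix.mulVec_injective_iff_isUnit.mpr hMunit)
    (by rw [hmv, Matrix.mulVec_zero])
  exact ⟨fun j => congrFun hu j, hMunit⟩
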